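/- Let (E_s) be a scale of Banach spaces and u a 1-bounded morphism with constant N = N¹_τ(u). Suppose s ∈ (0,τ) and 3N/(τ−s) ≤ 1/2, and assume the action is scaled at a ∈ E with constant C, i.e. |uⁿ·a|_s ≤ C σ^{−n} Nⁿ_{s+σ}(uⁿ) where Nⁿ(uⁿ) ≤ 3ⁿ n! Nⁿ. Then |(e^{−u}(Id+u) − Id)·a|_s ≤ 36 C N² / (τ−s)². -/

import Mathlib

/-- Quadratic-error estimate in the Kolmogorov iteration: if the action of the
`1`-bounded morphism `u` (with constant `N`) is scaled at `a` with constant `C`, i.e.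
`|uⁿ·a|_s ≤ C σ⁻ⁿ Nⁿ(uⁿ)` with `Nⁿ(uⁿ) ≤ 3ⁿ n! Nⁿ`, and `3N/(τ-s) ≤ 1/2`, then
`|(e^{-u}(Id + u) - Id)·a|_s = |∑ (-1)^{n+1} (n+1)/(n+2)! uⁿ⁺²·a|_s ≤ 36 C N²/(τ-s)²`. -/
theorem stmt_12 {V : Type*} [AddCommGroup V] [Module ℝ V]
    (p : ℝ → V → ℝ) (τ s : ℝ) (hs : 0 < s) (hsτ : s < τ)
    (hp : ∀ t : ℝ, ∀ x : V, 0 < t → 0 ≤ p t x)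
    (u : Module.End ℝ V) (N C : ℝ) (hN : 0 < N) (hC : 0 < C) (a : V)
    (hscaled : ∀ n : ℕ, 1 ≤ n → ∀ σ : ℝ, 0 < σ → σ ≤ τ - s →
      p s ((u ^ n) a) ≤ C / σ ^ n * (3 ^ n * n.factorial * N ^ n))
    (hsmall : 3 * N / (τ - s) ≤ 1 / 2) :
    Summable (fun n : ℕ => ((n : ℝ) + 1) / ((n + 2).factorial : ℝ) * p s ((u ^ (n + 2)) a)) ∧
    ∑' n : ℕ, ((n : ℝ) + 1) / ((n + 2).factorial : ℝ) * p s ((u ^ (n + 2)) a) ≤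
      36 * C * N ^ 2 / (τ - s) ^ 2 := by
  have hσ : 0 < τ - s := sub_pos.mpr hsτ
  set x : ℝ := 3 * N / (τ - s) with hxdef
  have hx0 : 0 < x := by positivity
  have hxhalf : x ≤ 1 / 2 := hsmall
  have hx1 : x < 1 := lt_of_le_of_lt hxhalf (by norm_num)
  have hnn : ∀ n : ℕ, 0 ≤ ((n : ℝ) + 1) / ((n + 2).factorial : ℝ) * p s ((u ^ (n + 2)) a) := by
    intro n
    have := hp s ((u ^ (n + 2)) a) hs
    positivity
  have key : ∀ n : ℕ, ((n : ℝ) + 1) / ((n + 2).factorial : ℝ) * p s ((u ^ (n + 2)) a)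
      ≤ C * ((n : ℝ) + 1) * x ^ (n + 2) := by
    intro n
    have h := hscaled (n + 2) (by omega) (τ - s) hσ le_rfl
    have hfac : (0 : ℝ) < ((n + 2).factorial : ℝ) := by positivity
    have h2 : ((n : ℝ) + 1) / ((n + 2).factorial : ℝ) * p s ((u ^ (n + 2)) a)
        ≤ ((n : ℝ) + 1) / ((n + 2).factorial : ℝ) *
          (C / (τ - s) ^ (n + 2) * (3 ^ (n + 2) * ((n + 2).factorial : ℝ) * N ^ (n + 2))) :=
      mul_le_mul_of_nonneg_left h (by positivity)
    refine h2.trans_eq ?_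
    rw [hxdef, div_pow, mul_pow]
    have hσ' : ((τ : ℝ) - s) ^ (n + 2) ≠ 0 := by positivity
    field_simp
  -- the geometric comparison series
  have hsum1 : Summable (fun n : ℕ => ((n : ℝ) + 1) * x ^ n) := by
    have h1 : Summable (fun n : ℕ => (n : ℝ) * x ^ n) := by
      have := summable_pow_mul_geometric_of_norm_lt_one (R := ℝ) 1
        (r := x) (by rw [Real.norm_eq_abs, abs_of_pos hx0]; exact hx1)
      simpa using this
    have h2 : Summable (fun n : ℕ => x ^ n) := summable_geometric_of_lt_one hx0.le hx1
    simpa [add_mul] using h1.add h2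
  have hsumg : Summable (fun n : ℕ => C * ((n : ℝ) + 1) * x ^ (n + 2)) := by
    have := (hsum1.mul_left (C * x ^ 2))
    refine this.congr fun n => ?_
    ring
  have hSummable : Summable (fun n : ℕ =>
      ((n : ℝ) + 1) / ((n + 2).factorial : ℝ) * p s ((u ^ (n + 2)) a)) :=
    Summable.of_nonneg_of_le hnn key hsumg
  refine ⟨hSummable, ?_⟩
  have hle := Summable.tsum_le_tsum key hSummable hsumg
  refine hle.trans ?_
  -- compute the geometric sum
  have ht1 : ∑' n : ℕ, (n : ℝ) * x ^ n = x / (1 - x) ^ 2 :=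
    tsum_coe_mul_geometric_of_norm_lt_one
      (by rw [Real.norm_eq_abs, abs_of_pos hx0]; exact hx1)
  have ht2 : ∑' n : ℕ, x ^ n = (1 - x)⁻¹ := tsum_geometric_of_lt_one hx0.le hx1
  have h1 : Summable (fun n : ℕ => (n : ℝ) * x ^ n) := by
    have := summable_pow_mul_geometric_of_norm_lt_one (R := ℝ) 1
      (r := x) (by rw [Real.norm_eq_abs, abs_of_pos hx0]; exact hx1)
    simpa using this
  have h2 : Summable (fun n : ℕ => x ^ n) := summable_geometric_of_lt_one hx0.le hx1
  have htsum1 : ∑' n : ℕ, ((n : ℝ) + 1) * x ^ n = 1 / (1 - x) ^ 2 := by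
    have hsplit : ∑' n : ℕ, ((n : ℝ) + 1) * x ^ n
        = (∑' n : ℕ, (n : ℝ) * x ^ n) + ∑' n : ℕ, x ^ n := by
      rw [← Summable.tsum_add h1 h2]
      exact tsum_congr fun n => by ring
    rw [hsplit, ht1, ht2]
    have hx1' : (1 : ℝ) - x ≠ 0 := by
      have : (0:ℝ) < 1 - x := by linarith
      linarith [this]
    have hx1'' : (1 : ℝ) - x > 0 := by linarith
    field_simp
    ring
  have htotal : ∑' n : ℕ, C * ((n : ℝ) + 1) * x ^ (n + 2)
      = C * x ^ 2 * (1 / (1 - x) ^ 2) := by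
    rw [← htsum1, ← tsum_mul_left]
    exact tsum_congr fun n => by ring
  rw [htotal]
  have hx1pos : (0 : ℝ) < 1 - x := by linarith
  have hquarter : (1 : ℝ) / (1 - x) ^ 2 ≤ 4 := by
    rw [div_le_iff₀ (by positivity)]
    nlinarith
  have hfinal : C * x ^ 2 * (1 / (1 - x) ^ 2) ≤ C * x ^ 2 * 4 :=
    mul_le_mul_of_nonneg_left hquarter (by positivity)
  refine hfinal.trans_eq ?_
  rw [hxdef, div_pow, mul_pow]
  have : ((τ : ℝ) - s) ^ 2 ≠ 0 := by positivity
  field_simp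
  ring
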